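/- Fix q ≥ 1. The algebra A_CW = ℂ[x₁, …, x_q]/⟨xᵢxⱼ (i ≠ j), xᵢ² − xⱼ², xᵢ³⟩ has (1, x₁, …, x_q, x₁²) as a ℂ-basis, and the bilinear map on ℂ^{q+2} obtained by transporting the multiplication of A_CW along this basis is smoothable: it lies in the closure of the GL(ℂ^{q+2})-orbit {(x, y) ↦ g(μ(g⁻¹x, g⁻¹y)) : g ∈ GL(ℂ^{q+2})} of the coordinatewise multiplication μ(x, y) = (x₁y₁, …, x_{q+2}y_{q+2}) of ℂ^{q+2}. -/

import Mathlib

open scoped BigOperators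

open MvPolynomial in
/-- The ideal `⟨xᵢxⱼ (i ≠ j), xᵢ² − xⱼ², xᵢ³⟩` of `ℂ[x₁, …, x_q]`. -/
noncomputable def cwIdeal (q : ℕ) : Ideal (MvPolynomial (Fin q) ℂ) :=
  Ideal.span ({p | ∃ i j, i ≠ j ∧ p = X i * X j} ∪
    {p | ∃ i j, p = X i ^ 2 - X j ^ 2} ∪
    {p | ∃ i, p = X i ^ 3})

/-- The Coppersmith–Winograd algebra `A_CW = ℂ[x₁, …, x_q] / cwIdeal q`. -/
abbrev ACW (q : ℕ) : Type := MvPolynomial (Fin q) ℂ ⧸ cwIdeal q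

/-- The index of the basis vector corresponding to `xᵢ` inside `Fin (q + 2)`. -/
def emb (q : ℕ) (i : Fin q) : Fin (q + 2) := ⟨i.1 + 1, by omega⟩

/-- Coordinatewise multiplication of `ℂⁿ` as a structure-constant array. -/
noncomputable def diagMul (n : ℕ) : Fin n → Fin n → Fin n → ℂ :=
  fun i j k => if i = j ∧ j = k then 1 else 0

/-- The `GL(ℂⁿ)`-orbit `{(x, y) ↦ g (μ (g⁻¹ x, g⁻¹ y)) : g ∈ GL(ℂⁿ)}` of the
bilinear map `μ`, in coordinates. -/
def BilOrbit {n : ℕ} (μ : Fin n → Fin n → Fin n → ℂ) :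
    Set (Fin n → Fin n → Fin n → ℂ) :=
  {S | ∃ g : GL (Fin n) ℂ,
    S = fun i j k => ∑ a, ∑ b, ∑ c,
      (↑g⁻¹ : Matrix (Fin n) (Fin n) ℂ) a i *
      (↑g⁻¹ : Matrix (Fin n) (Fin n) ℂ) b j *
      (↑g : Matrix (Fin n) (Fin n) ℂ) k c * μ a b c}


/-- Non-unital model: `(Fin q → ℂ) × ℂ` with `(v,c)*(w,d) = (0, ∑ vᵢwᵢ)`. -/
def CWModel (q : ℕ) : Type := (Fin q → ℂ) × ℂ

noncomputable instance (q : ℕ) : AddCommGroup (CWModel q) :=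
  inferInstanceAs (AddCommGroup ((Fin q → ℂ) × ℂ))
noncomputable instance (q : ℕ) : Module ℂ (CWModel q) :=
  inferInstanceAs (Module ℂ ((Fin q → ℂ) × ℂ))

noncomputable instance (q : ℕ) : Mul (CWModel q) := ⟨fun x y => (0, ∑ i, x.1 i * y.1 i)⟩

namespace CWModel
variable {q : ℕ}

@[simp] lemma mul_fst (x y : CWModel q) : (x * y).1 = 0 := rfl
@[simp] lemma mul_snd (x y : CWModel q) : (x * y).2 = ∑ i, x.1 i * y.1 i := rfl
@[simp] lemma add_fst (x y : CWModel q) : (x + y).1 = x.1 + y.1 := rfl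
@[simp] lemma add_snd (x y : CWModel q) : (x + y).2 = x.2 + y.2 := rfl
@[simp] lemma smul_fst (a : ℂ) (x : CWModel q) : (a • x).1 = a • x.1 := rfl
@[simp] lemma smul_snd (a : ℂ) (x : CWModel q) : (a • x).2 = a * x.2 := rfl
@[simp] lemma zero_fst : (0 : CWModel q).1 = 0 := rfl
@[simp] lemma zero_snd : (0 : CWModel q).2 = 0 := rfl

lemma ext' {x y : CWModel q} (h1 : x.1 = y.1) (h2 : x.2 = y.2) : x = y := Prod.ext h1 h2

noncomputable instance : NonUnitalCommRing (CWModel q) where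
  left_distrib x y z := by
    refine ext' ?_ ?_ <;> simp [mul_add, Finset.sum_add_distrib]
  right_distrib x y z := by
    refine ext' ?_ ?_ <;> simp [add_mul, Finset.sum_add_distrib]
  zero_mul x := by refine ext' ?_ ?_ <;> simp
  mul_zero x := by refine ext' ?_ ?_ <;> simp
  mul_assoc x y z := by refine ext' ?_ ?_ <;> simp
  mul_comm x y := by refine ext' ?_ ?_ <;> simp [mul_comm]

noncomputable instance : SMulCommClass ℂ (CWModel q) (CWModel q) where
  smul_comm a x y := by
    refine ext' ?_ ?_ <;> simp [Finset.mul_sum, mul_left_comm]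

noncomputable instance : IsScalarTower ℂ (CWModel q) (CWModel q) where
  smul_assoc a x y := by
    refine ext' ?_ ?_ <;> simp [Finset.mul_sum, mul_assoc]

end CWModel

noncomputable abbrev CWB (q : ℕ) := Unitization ℂ (CWModel q)

-- ideal membership lemmas
open MvPolynomial
lemma mem_g1 {q : ℕ} {i j : Fin q} (h : i ≠ j) : X i * X j ∈ cwIdeal q :=
  Ideal.subset_span (Or.inl (Or.inl ⟨i, j, h, rfl⟩))
lemma mem_g2 {q : ℕ} (i j : Fin q) : X i ^ 2 - X j ^ 2 ∈ cwIdeal q :=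
  Ideal.subset_span (Or.inl (Or.inr ⟨i, j, rfl⟩))
lemma mem_g3 {q : ℕ} (i : Fin q) : (X i : MvPolynomial (Fin q) ℂ) ^ 3 ∈ cwIdeal q :=
  Ideal.subset_span (Or.inr ⟨i, rfl⟩)
lemma mem_g4 {q : ℕ} (i j : Fin q) : X i * X j ^ 2 ∈ cwIdeal q := by
  by_cases h : i = j
  · subst h
    have : (X i : MvPolynomial (Fin q) ℂ) * X i ^ 2 = X i ^ 3 := by ring
    rw [this]; exact mem_g3 i
  · have : (X i : MvPolynomial (Fin q) ℂ) * X j ^ 2 = (X i * X j) * X j := by ring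
    rw [this]; exact Ideal.mul_mem_right _ _ (mem_g1 h)
lemma mem_g5 {q : ℕ} (i j : Fin q) : X i ^ 2 * X j ^ 2 ∈ cwIdeal q := by
  have : (X i : MvPolynomial (Fin q) ℂ) ^ 2 * X j ^ 2 = (X i * X j ^2) * X i := by ring
  rw [this]; exact Ideal.mul_mem_right _ _ (mem_g4 i j)

-- quotient multiplication lemmas
private noncomputable abbrev mk {q : ℕ} := Ideal.Quotient.mk (cwIdeal q)

lemma mk_eq_zero {q : ℕ} {p : MvPolynomial (Fin q) ℂ} (h : p ∈ cwIdeal q) : mk p = 0 :=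
  (Ideal.Quotient.eq_zero_iff_mem).mpr h

lemma mk_sq {q : ℕ} (i j : Fin q) : mk (X i ^ 2) = mk (X j ^ 2) :=
  Ideal.Quotient.eq.mpr (mem_g2 i j)

/-- generator `xᵢ` in the model. -/
noncomputable def gen {q : ℕ} (i : Fin q) : CWModel q := ((Pi.single i 1 : Fin q → ℂ), 0)
/-- socle element in the model. -/
noncomputable def sgen {q : ℕ} (c : ℂ) : CWModel q := (0, c)

@[simp] lemma gen_fst {q : ℕ} (i : Fin q) : (gen i).1 = Pi.single i 1 := rfl
@[simp] lemma gen_snd {q : ℕ} (i : Fin q) : (gen i).2 = 0 := rfl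
@[simp] lemma sgen_fst {q : ℕ} (c : ℂ) : (sgen (q := q) c).1 = 0 := rfl
@[simp] lemma sgen_snd {q : ℕ} (c : ℂ) : (sgen (q := q) c).2 = c := rfl

lemma modelmul {q : ℕ} (i j : Fin q) :
    (gen i * gen j : CWModel q) = sgen (if i = j then 1 else 0) := by
  refine CWModel.ext' (by simp) ?_
  simp only [CWModel.mul_snd, gen_fst, sgen_snd]
  rw [Finset.sum_eq_single j]
  · simp [Pi.single_apply, eq_comm]
  · intro k _ hk
    simp [Pi.single_apply, hk]
  · simp

lemma modelmul_sgen {q : ℕ} (x : CWModel q) (c : ℂ) : sgen c * x = sgen 0 := by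
  refine CWModel.ext' (by simp) ?_
  simp [CWModel.mul_snd]

noncomputable def phiCW (q : ℕ) : MvPolynomial (Fin q) ℂ →ₐ[ℂ] CWB q :=
  MvPolynomial.aeval (fun i => Unitization.inr (gen i))

@[simp] lemma phiCW_X {q : ℕ} (i : Fin q) :
    phiCW q (X i) = Unitization.inr (gen i) := by
  simp [phiCW]

@[simp] lemma sgen_zero {q : ℕ} : sgen (q := q) 0 = 0 := by
  refine CWModel.ext' (by simp) (by simp)

lemma phiCW_vanish {q : ℕ} : ∀ p ∈ cwIdeal q, phiCW q p = 0 := by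
  intro p hp
  have : cwIdeal q ≤ RingHom.ker (phiCW q).toRingHom := by
    rw [cwIdeal, Ideal.span_le]
    rintro p (((⟨i, j, hij, rfl⟩ | ⟨i, j, rfl⟩) | ⟨i, rfl⟩)) <;>
        simp only [SetLike.mem_coe, RingHom.mem_ker, AlgHom.toRingHom_eq_coe,
          RingHom.coe_coe]
    · rw [map_mul, phiCW_X, phiCW_X, ← Unitization.inr_mul, modelmul]
      simp [hij]
    · rw [map_sub, pow_two, pow_two, map_mul, map_mul]
      simp only [phiCW_X, ← Unitization.inr_mul, modelmul]
      simp
    · have h3 : (X i : MvPolynomial (Fin q) ℂ)^3 = X i * X i * X i := by ring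
      rw [h3, map_mul, map_mul]
      simp only [phiCW_X, ← Unitization.inr_mul, modelmul, modelmul_sgen]
      simp
  exact this hp

noncomputable def psiCW (q : ℕ) : ACW q →ₐ[ℂ] CWB q :=
  Ideal.Quotient.liftₐ (cwIdeal q) (phiCW q) phiCW_vanish

@[simp] lemma psiCW_mk {q : ℕ} (p : MvPolynomial (Fin q) ℂ) :
    psiCW q (mk p) = phiCW q p := rfl

-- emb lemmas
@[simp] lemma emb_ne_zero {q : ℕ} (i : Fin q) : emb q i ≠ 0 := by
  simp [emb, Fin.ext_iff]
@[simp] lemma emb_ne_last {q : ℕ} (i : Fin q) : emb q i ≠ Fin.last (q + 1) := by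
  have := i.2
  simp [emb, Fin.ext_iff]
  omega
@[simp] lemma zero_ne_last {q : ℕ} : (0 : Fin (q + 2)) ≠ Fin.last (q + 1) := by
  simp [Fin.ext_iff]
lemma emb_inj {q : ℕ} {i j : Fin q} : emb q i = emb q j ↔ i = j := by
  simp [emb, Fin.ext_iff]

lemma fin_tri {q : ℕ} (a : Fin (q + 2)) :
    a = 0 ∨ (∃ i : Fin q, a = emb q i) ∨ a = Fin.last (q + 1) := by
  rcases eq_or_ne a.1 0 with h | h
  · exact Or.inl (Fin.ext h)
  rcases eq_or_ne a.1 (q + 1) with h2 | h2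
  · exact Or.inr (Or.inr (Fin.ext h2))
  · have := a.2
    exact Or.inr (Or.inl ⟨⟨a.1 - 1, by omega⟩, by simp [emb, Fin.ext_iff]; omega⟩)

lemma sum_tri {q : ℕ} {M : Type*} [AddCommMonoid M] (f : Fin (q + 2) → M) :
    ∑ a, f a = f 0 + (∑ i : Fin q, f (emb q i)) + f (Fin.last (q + 1)) := by
  rw [Fin.sum_univ_succ, Fin.sum_univ_castSucc]
  have h1 : ∀ i : Fin q, ((i.castSucc).succ : Fin (q + 2)) = emb q i :=
    fun i => Fin.ext (by simp [emb])
  have h2 : ((Fin.last q).succ : Fin (q + 2)) = Fin.last (q + 1) := Fin.ext (by simp)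
  simp only [h1, h2, add_assoc]

noncomputable def coordB (q : ℕ) : CWB q →ₗ[ℂ] (Fin (q + 2) → ℂ) where
  toFun b k :=
    if h0 : k = 0 then b.fst
    else if hl : k = Fin.last (q + 1) then b.snd.2
    else b.snd.1 ⟨k.1 - 1, by
      have h2 := k.2
      have h3 : k.1 ≠ q + 1 := by simpa [Fin.ext_iff] using hl
      have h4 : k.1 ≠ 0 := fun h => h0 (Fin.ext (by simp [h]))
      omega⟩
  map_add' x y := by
    funext k
    by_cases h0 : k = 0 <;> by_cases hl : k = Fin.last (q + 1) <;>
      simp [h0, hl]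
  map_smul' a x := by
    funext k
    by_cases h0 : k = 0 <;> by_cases hl : k = Fin.last (q + 1) <;>
      simp [h0, hl]

noncomputable def bvec (q : ℕ) (hq : 1 ≤ q) : Fin (q + 2) → ACW q := fun k =>
  if h0 : k = 0 then 1
  else if hl : k = Fin.last (q + 1) then mk (X (⟨0, hq⟩ : Fin q) ^ 2)
  else mk (X (⟨k.1 - 1, by
      have h2 := k.2
      have h3 : k.1 ≠ q + 1 := by simpa [Fin.ext_iff] using hl
      have h4 : k.1 ≠ 0 := fun h => h0 (Fin.ext (by simp [h]))
      omega⟩ : Fin q))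

@[simp] lemma bvec_zero {q : ℕ} (hq : 1 ≤ q) : bvec q hq 0 = 1 := by simp [bvec]
@[simp] lemma bvec_last {q : ℕ} (hq : 1 ≤ q) :
    bvec q hq (Fin.last (q + 1)) = mk (X (⟨0, hq⟩ : Fin q) ^ 2) := by
  simp [bvec]
@[simp] lemma bvec_emb {q : ℕ} (hq : 1 ≤ q) (i : Fin q) :
    bvec q hq (emb q i) = mk (X i) := by
  rw [bvec, dif_neg (emb_ne_zero i), dif_neg (emb_ne_last i)]
  congr 2

lemma coord_bvec {q : ℕ} (hq : 1 ≤ q) (k : Fin (q + 2)) :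
    coordB q (psiCW q (bvec q hq k)) = Pi.single k 1 := by
  rcases fin_tri k with rfl | ⟨i, rfl⟩ | rfl
  · rw [bvec_zero]
    funext k'
    rcases fin_tri k' with rfl | ⟨j, rfl⟩ | rfl <;>
      simp [coordB, Pi.single_apply, emb_ne_zero, emb_ne_last]
  · rw [bvec_emb, psiCW_mk, phiCW_X]
    funext k'
    rcases fin_tri k' with rfl | ⟨j, rfl⟩ | rfl
    · simp [coordB, Pi.single_apply, (emb_ne_zero i).symm]
    · rw [coordB]
      simp only [LinearMap.coe_mk, AddHom.coe_mk, dif_neg (emb_ne_zero j),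
        dif_neg (emb_ne_last j)]
      rw [Unitization.snd_inr]
      have : (⟨(emb q j).1 - 1, by have := j.2; simp only [emb]; omega⟩ : Fin q) = j :=
        Fin.ext (by simp [emb])
      rw [this]
      simp [Pi.single_apply, emb_inj, eq_comm]
    · simp [coordB, Pi.single_apply, emb_ne_last]
  · rw [bvec_last, psiCW_mk, pow_two, map_mul, phiCW_X, ← Unitization.inr_mul, modelmul,
      if_pos rfl]
    funext k'
    rcases fin_tri k' with rfl | ⟨j, rfl⟩ | rfl <;>
      simp [coordB, Pi.single_apply, emb_ne_zero, emb_ne_last, zero_ne_last,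
        (zero_ne_last (q := q)).symm]

lemma bvec_li {q : ℕ} (hq : 1 ≤ q) : LinearIndependent ℂ (bvec q hq) := by
  apply LinearIndependent.of_comp ((coordB q) ∘ₗ (psiCW q).toLinearMap)
  have : (⇑(coordB q ∘ₗ (psiCW q).toLinearMap)) ∘ (bvec q hq)
      = fun k => (Pi.single k 1 : Fin (q + 2) → ℂ) := by
    funext k
    simp [coord_bvec hq k]
  rw [this]
  have h2 : (fun k => (Pi.single k 1 : Fin (q + 2) → ℂ)) = ⇑(Pi.basisFun ℂ (Fin (q + 2))) := by
    funext k
    rw [Pi.basisFun_apply]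
  rw [h2]
  exact (Pi.basisFun ℂ (Fin (q + 2))).linearIndependent

lemma mulX_mem_span {q : ℕ} (hq : 1 ≤ q) (i : Fin q) {x : ACW q}
    (hx : x ∈ Submodule.span ℂ (Set.range (bvec q hq))) :
    x * mk (X i) ∈ Submodule.span ℂ (Set.range (bvec q hq)) := by
  induction hx using Submodule.span_induction with
  | mem x h =>
    obtain ⟨k, rfl⟩ := h
    rcases fin_tri k with rfl | ⟨j, rfl⟩ | rfl
    · rw [bvec_zero, one_mul]
      exact Submodule.subset_span ⟨emb q i, bvec_emb hq i⟩
    · rw [bvec_emb]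
      by_cases h : j = i
      · subst h
        rw [← map_mul, ← pow_two, show mk (X j ^ 2) = mk (X (⟨0, hq⟩ : Fin q) ^ 2) from
          mk_sq j _]
        exact Submodule.subset_span ⟨Fin.last (q + 1), bvec_last hq⟩
      · rw [← map_mul, mk_eq_zero (mem_g1 h)]
        exact Submodule.zero_mem _
    · rw [bvec_last, ← map_mul]
      have : (X (⟨0, hq⟩ : Fin q) : MvPolynomial (Fin q) ℂ) ^ 2 * X i
          = X i * X (⟨0, hq⟩ : Fin q) ^ 2 := by ring
      rw [this, mk_eq_zero (mem_g4 _ _)]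
      exact Submodule.zero_mem _
  | zero => rw [zero_mul]; exact Submodule.zero_mem _
  | add x y hx hy ihx ihy => rw [add_mul]; exact Submodule.add_mem _ ihx ihy
  | smul a x hx ih => rw [smul_mul_assoc]; exact Submodule.smul_mem _ a ih

lemma bvec_span {q : ℕ} (hq : 1 ≤ q) :
    ⊤ ≤ Submodule.span ℂ (Set.range (bvec q hq)) := by
  have key : ∀ p : MvPolynomial (Fin q) ℂ, mk p ∈ Submodule.span ℂ (Set.range (bvec q hq)) := by
    intro p
    induction p using MvPolynomial.induction_on with
    | C a =>
      rw [show (MvPolynomial.C a : MvPolynomial (Fin q) ℂ) = algebraMap ℂ _ a from rfl,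
        Ideal.Quotient.mk_algebraMap, Algebra.algebraMap_eq_smul_one]
      exact Submodule.smul_mem _ a (Submodule.subset_span ⟨0, bvec_zero hq⟩)
    | add p r hp hr => rw [map_add]; exact Submodule.add_mem _ hp hr
    | mul_X p i hp => rw [map_mul]; exact mulX_mem_span hq i hp
  intro x _
  obtain ⟨p, rfl⟩ := Ideal.Quotient.mk_surjective (I := cwIdeal q) x
  exact key p

noncomputable def cwBasis (q : ℕ) (hq : 1 ≤ q) : Module.Basis (Fin (q + 2)) ℂ (ACW q) :=
  Module.Basis.mk (bvec_li hq) (bvec_span hq)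

@[simp] lemma cwBasis_apply {q : ℕ} (hq : 1 ≤ q) (k : Fin (q + 2)) :
    cwBasis q hq k = bvec q hq k := Module.Basis.mk_apply _ _ _

noncomputable def muLim (q : ℕ) : Fin (q + 2) → Fin (q + 2) → Fin (q + 2) → ℂ :=
  fun i j k =>
    if i = 0 then (if j = k then 1 else 0)
    else if j = 0 then (if i = k then 1 else 0)
    else if i = j ∧ i ≠ Fin.last (q + 1) ∧ k = Fin.last (q + 1) then 1 else 0

lemma repr_eq_muLim {q : ℕ} (hq : 1 ≤ q) :
    (fun i j k => (cwBasis q hq).repr (cwBasis q hq i * cwBasis q hq j) k) = muLim q := by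
  funext i j k
  rcases fin_tri i with rfl | ⟨a, rfl⟩ | rfl
  · have h1 : cwBasis q hq 0 * cwBasis q hq j = cwBasis q hq j := by
      rw [cwBasis_apply hq 0, bvec_zero, one_mul]
    rw [h1, Module.Basis.repr_self, Finsupp.single_apply, muLim, if_pos rfl]
  · rcases fin_tri j with rfl | ⟨c, rfl⟩ | rfl
    · have h1 : cwBasis q hq (emb q a) * cwBasis q hq 0 = cwBasis q hq (emb q a) := by
        rw [cwBasis_apply hq 0, bvec_zero, mul_one]
      rw [h1, Module.Basis.repr_self, Finsupp.single_apply, muLim, if_neg (emb_ne_zero a),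
        if_pos rfl]
    · by_cases h : a = c
      · subst h
        have h1 : cwBasis q hq (emb q a) * cwBasis q hq (emb q a)
            = cwBasis q hq (Fin.last (q + 1)) := by
          rw [cwBasis_apply, bvec_emb, ← map_mul, ← pow_two, mk_sq a (⟨0, hq⟩ : Fin q),
            show mk (X (⟨0, hq⟩ : Fin q) ^ 2) = cwBasis q hq (Fin.last (q + 1)) by
              rw [cwBasis_apply, bvec_last]]
        rw [h1, Module.Basis.repr_self, Finsupp.single_apply, muLim, if_neg (emb_ne_zero a),
          if_neg (emb_ne_zero a)]
        have heq : (emb q a = emb q a ∧ emb q a ≠ Fin.last (q + 1) ∧ k = Fin.last (q + 1))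
            ↔ k = Fin.last (q + 1) := by simp [emb_ne_last]
        rw [if_congr heq rfl rfl]
        by_cases hk : k = Fin.last (q + 1)
        · simp [hk]
        · simp [hk, Ne.symm hk]
      · have h1 : cwBasis q hq (emb q a) * cwBasis q hq (emb q c) = 0 := by
          rw [cwBasis_apply, cwBasis_apply, bvec_emb, bvec_emb, ← map_mul,
            mk_eq_zero (mem_g1 h)]
        rw [h1, LinearEquiv.map_zero, Finsupp.coe_zero, Pi.zero_apply, muLim,
          if_neg (emb_ne_zero a), if_neg (emb_ne_zero c), if_neg]
        rintro ⟨he, -⟩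
        exact h (emb_inj.mp he)
    · have h1 : cwBasis q hq (emb q a) * cwBasis q hq (Fin.last (q + 1)) = 0 := by
        rw [cwBasis_apply, cwBasis_apply, bvec_emb, bvec_last, ← map_mul,
          mk_eq_zero (mem_g4 a _)]
      rw [h1, LinearEquiv.map_zero, Finsupp.coe_zero, Pi.zero_apply, muLim,
        if_neg (emb_ne_zero a), if_neg (Ne.symm (zero_ne_last)), if_neg]
      rintro ⟨he, -⟩
      exact emb_ne_last a he
  · rcases fin_tri j with rfl | ⟨c, rfl⟩ | rfl
    · have h1 : cwBasis q hq (Fin.last (q + 1)) * cwBasis q hq 0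
          = cwBasis q hq (Fin.last (q + 1)) := by
        rw [cwBasis_apply hq 0, bvec_zero, mul_one]
      rw [h1, Module.Basis.repr_self, Finsupp.single_apply, muLim,
        if_neg (Ne.symm zero_ne_last), if_pos rfl]
    · have h1 : cwBasis q hq (Fin.last (q + 1)) * cwBasis q hq (emb q c) = 0 := by
        rw [cwBasis_apply, cwBasis_apply, bvec_last, bvec_emb, ← map_mul,
          show (X (⟨0, hq⟩ : Fin q) : MvPolynomial (Fin q) ℂ) ^ 2 * X c
            = X c * X (⟨0, hq⟩ : Fin q) ^ 2 by ring,
          mk_eq_zero (mem_g4 c _)]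
      rw [h1, LinearEquiv.map_zero, Finsupp.coe_zero, Pi.zero_apply, muLim,
        if_neg (Ne.symm zero_ne_last), if_neg (emb_ne_zero c), if_neg]
      rintro ⟨he, -⟩
      exact emb_ne_last c he.symm
    · have h1 : cwBasis q hq (Fin.last (q + 1)) * cwBasis q hq (Fin.last (q + 1)) = 0 := by
        rw [cwBasis_apply, bvec_last, ← map_mul, mk_eq_zero (mem_g5 _ _)]
      rw [h1, LinearEquiv.map_zero, Finsupp.coe_zero, Pi.zero_apply, muLim,
        if_neg (Ne.symm zero_ne_last), if_neg (Ne.symm zero_ne_last), if_neg]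
      rintro ⟨-, hne, -⟩
      exact hne rfl

@[simp] lemma zero_ne_emb {q : ℕ} (i : Fin q) : (0 : Fin (q + 2)) ≠ emb q i :=
  (emb_ne_zero i).symm
@[simp] lemma last_ne_emb {q : ℕ} (i : Fin q) : Fin.last (q + 1) ≠ emb q i :=
  (emb_ne_last i).symm
@[simp] lemma last_ne_zero' {q : ℕ} : Fin.last (q + 1) ≠ (0 : Fin (q + 2)) :=
  (zero_ne_last).symm
@[simp] lemma zero_ne_last' {q : ℕ} : (0 : Fin (q + 2)) ≠ Fin.last (q + 1) := zero_ne_last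
attribute [simp] emb_inj

noncomputable def Pm (q : ℕ) (ε : ℂ) : Matrix (Fin (q + 2)) (Fin (q + 2)) ℂ :=
  Matrix.of fun a k =>
    if k = 0 then 1
    else if k = Fin.last (q + 1) then (if a = 0 then ε ^ 4 - ε ^ 3 else 0)
    else if a = 0 then ε ^ 2 else if a = k then ε else 0

noncomputable def Qm (q : ℕ) (ε : ℂ) : Matrix (Fin (q + 2)) (Fin (q + 2)) ℂ :=
  Matrix.of fun k a =>
    if k = 0 then (if a = Fin.last (q + 1) then 1 else 0)
    else if k = Fin.last (q + 1) then
      (if a = 0 then (ε ^ 4 - ε ^ 3)⁻¹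
       else if a = Fin.last (q + 1) then (q * ε - 1) * (ε ^ 4 - ε ^ 3)⁻¹
       else -ε * (ε ^ 4 - ε ^ 3)⁻¹)
    else (if a = k then ε⁻¹ else if a = Fin.last (q + 1) then -ε⁻¹ else 0)

lemma QP_eq_one {q : ℕ} {ε : ℂ} (hε : ε ≠ 0) (hA : ε ^ 4 - ε ^ 3 ≠ 0) :
    Qm q ε * Pm q ε = 1 := by
  ext k k'
  rw [Matrix.mul_apply, sum_tri]
  rcases fin_tri k with rfl | ⟨m, rfl⟩ | rfl <;>
    rcases fin_tri k' with rfl | ⟨j, rfl⟩ | rfl <;>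
    simp [Pm, Qm, Matrix.one_apply, Finset.sum_ite_eq', hε, hA, Finset.mul_sum] <;>
    first
      | (simp [eq_comm]; done)
      | (rw [eq_comm]; field_simp; ring1)
      | (rw [eq_comm]; field_simp; ring_nf)
      | (rw [eq_comm]; field_simp)

lemma PQ_eq_one {q : ℕ} {ε : ℂ} (hε : ε ≠ 0) (hA : ε ^ 4 - ε ^ 3 ≠ 0) :
    Pm q ε * Qm q ε = 1 := mul_eq_one_comm.mpr (QP_eq_one hε hA)

noncomputable def gCW (q : ℕ) (ε : ℂ) (hε : ε ≠ 0) (hA : ε ^ 4 - ε ^ 3 ≠ 0) :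
    GL (Fin (q + 2)) ℂ :=
  ⟨Qm q ε, Pm q ε, QP_eq_one hε hA, PQ_eq_one hε hA⟩

lemma gCW_coe {q : ℕ} (ε : ℂ) (hε : ε ≠ 0) (hA : ε ^ 4 - ε ^ 3 ≠ 0) :
    ((gCW q ε hε hA : GL (Fin (q + 2)) ℂ) : Matrix (Fin (q + 2)) (Fin (q + 2)) ℂ) = Qm q ε :=
  rfl

lemma gCW_inv_coe {q : ℕ} (ε : ℂ) (hε : ε ≠ 0) (hA : ε ^ 4 - ε ^ 3 ≠ 0) :
    (((gCW q ε hε hA)⁻¹ : GL (Fin (q + 2)) ℂ) : Matrix (Fin (q + 2)) (Fin (q + 2)) ℂ)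
      = Pm q ε := rfl

lemma collapse {n : ℕ} (P Q : Matrix (Fin n) (Fin n) ℂ) (i j k : Fin n) :
    (∑ a, ∑ b, ∑ c, P a i * P b j * Q k c * diagMul n a b c)
      = ∑ a, P a i * P a j * Q k a := by
  refine Finset.sum_congr rfl fun a _ => ?_
  rw [Finset.sum_eq_single a]
  · rw [Finset.sum_eq_single a]
    · simp [diagMul]
    · intro c _ hc
      simp [diagMul, Ne.symm hc]
    · simp
  · intro b _ hb
    apply Finset.sum_eq_zero
    intro c _
    simp [diagMul, Ne.symm hb]
  · simp

noncomputable def SF (q : ℕ) (ε : ℂ) : Fin (q + 2) → Fin (q + 2) → Fin (q + 2) → ℂ :=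
  fun i j k =>
    if i = 0 then (if j = k then 1 else 0)
    else if j = 0 then (if i = k then 1 else 0)
    else if i = Fin.last (q + 1) ∨ j = Fin.last (q + 1) then
      (if i = j then (if k = Fin.last (q + 1) then ε ^ 4 - ε ^ 3 else 0)
       else (if k = Fin.last (q + 1) then ε ^ 2 else 0))
    else if i = j then (if k = Fin.last (q + 1) then 1 else if k = i then ε else 0)
    else (if k = Fin.last (q + 1) then ε / (ε - 1) else 0)

lemma sum_PPQ {q : ℕ} {ε : ℂ} (hε : ε ≠ 0) (hA : ε ^ 4 - ε ^ 3 ≠ 0)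
    (i j k : Fin (q + 2)) :
    (∑ a, Pm q ε a i * Pm q ε a j * Qm q ε k a) = SF q ε i j k := by
  have h1 : (ε:ℂ) - 1 ≠ 0 := by
    intro h
    apply hA
    have : ε = 1 := by linear_combination h
    simp [this]
  rcases fin_tri i with rfl | ⟨a', rfl⟩ | rfl
  · -- i = 0 : reduces to (Qm * Pm) k j
    have : (∑ a, Pm q ε a 0 * Pm q ε a j * Qm q ε k a) = (Qm q ε * Pm q ε) k j := by
      rw [Matrix.mul_apply]
      refine Finset.sum_congr rfl fun a _ => ?_
      have hP : Pm q ε a 0 = 1 := by simp [Pm]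
      rw [hP, one_mul, mul_comm]
    rw [this, QP_eq_one hε hA, Matrix.one_apply, SF, if_pos rfl]
    by_cases h : j = k
    · simp [h]
    · have hkj : ¬k = j := fun hh => h hh.symm
      rw [if_neg hkj, if_neg h]
  · rcases fin_tri j with rfl | ⟨c', rfl⟩ | rfl
    · have : (∑ a, Pm q ε a (emb q a') * Pm q ε a 0 * Qm q ε k a)
          = (Qm q ε * Pm q ε) k (emb q a') := by
        rw [Matrix.mul_apply]
        refine Finset.sum_congr rfl fun a _ => ?_
        have hP : Pm q ε a 0 = 1 := by simp [Pm]
        rw [hP, mul_one, mul_comm]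
      rw [this, QP_eq_one hε hA, Matrix.one_apply, SF, if_neg (emb_ne_zero a'), if_pos rfl]
      by_cases h : emb q a' = k
      · simp [h]
      · rw [if_neg (fun hh : k = emb q a' => h hh.symm), if_neg h]
    · by_cases h : a' = c'
      · subst h
        rw [sum_tri]
        rcases fin_tri k with rfl | ⟨m, rfl⟩ | rfl <;>
          simp [Pm, Qm, SF, Finset.sum_ite_eq', hε, hA, Finset.mul_sum] <;>
          first
          | (simp [eq_comm]; done)
          | (intro h2; simp [h2])
          | (rw [eq_comm]; field_simp; ring1)
          | (rw [eq_comm]; field_simp; ring_nf)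
          | (rw [eq_comm]; field_simp)
      · rw [sum_tri]
        rcases fin_tri k with rfl | ⟨m, rfl⟩ | rfl <;>
          simp [Pm, Qm, SF, h, Ne.symm h, Finset.sum_ite_eq', hε, hA, Finset.mul_sum] <;>
          first
          | (simp [eq_comm]; done)
          | (intro h2; simp [h2]; exact fun hh => h hh.symm)
          | (intro h2; simp [h2])
          | (rw [eq_comm]; field_simp; ring1)
          | (rw [eq_comm]; field_simp; ring_nf)
          | (rw [eq_comm]; field_simp)
    · rw [sum_tri]
      rcases fin_tri k with rfl | ⟨m, rfl⟩ | rfl <;>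
        simp [Pm, Qm, SF, Finset.sum_ite_eq', hε, hA, Finset.mul_sum] <;>
        first
          | (simp [eq_comm]; done)
          | (rw [eq_comm]; field_simp; ring1)
          | (rw [eq_comm]; field_simp; ring_nf)
          | (rw [eq_comm]; field_simp)
  · rcases fin_tri j with rfl | ⟨c', rfl⟩ | rfl
    · have : (∑ a, Pm q ε a (Fin.last (q + 1)) * Pm q ε a 0 * Qm q ε k a)
          = (Qm q ε * Pm q ε) k (Fin.last (q + 1)) := by
        rw [Matrix.mul_apply]
        refine Finset.sum_congr rfl fun a _ => ?_
        have hP : Pm q ε a 0 = 1 := by simp [Pm]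
        rw [hP, mul_one, mul_comm]
      rw [this, QP_eq_one hε hA, Matrix.one_apply, SF, if_neg last_ne_zero', if_pos rfl]
      by_cases h : Fin.last (q + 1) = k
      · simp [h]
      · rw [if_neg (fun hh : k = Fin.last (q + 1) => h hh.symm), if_neg h]
    · rw [sum_tri]
      rcases fin_tri k with rfl | ⟨m, rfl⟩ | rfl <;>
        simp [Pm, Qm, SF, Finset.sum_ite_eq', hε, hA, Finset.mul_sum] <;>
        first
          | (simp [eq_comm]; done)
          | (rw [eq_comm]; field_simp; ring1)
          | (rw [eq_comm]; field_simp; ring_nf)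
          | (rw [eq_comm]; field_simp)
    · rw [sum_tri]
      rcases fin_tri k with rfl | ⟨m, rfl⟩ | rfl <;>
        simp [Pm, Qm, SF, Finset.sum_ite_eq', hε, hA, Finset.mul_sum] <;>
        first
          | (simp [eq_comm]; done)
          | (rw [eq_comm]; field_simp; ring1)
          | (rw [eq_comm]; field_simp; ring_nf)
          | (rw [eq_comm]; field_simp)

noncomputable def epsn (n : ℕ) : ℂ := ((n : ℂ) + 2)⁻¹

lemma epsn_ne_zero (n : ℕ) : epsn n ≠ 0 := by
  apply inv_ne_zero
  intro h
  have : ((n : ℂ) : ℂ) = -2 := by linear_combination h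
  norm_cast at this

lemma epsn_ne_one (n : ℕ) : epsn n ≠ 1 := by
  intro h
  rw [epsn, inv_eq_one] at h
  have : ((n : ℂ) : ℂ) = -1 := by linear_combination h
  norm_cast at this

lemma hA_of {ε : ℂ} (hε : ε ≠ 0) (h1 : ε ≠ 1) : ε ^ 4 - ε ^ 3 ≠ 0 := by
  have : ε ^ 4 - ε ^ 3 = ε ^ 3 * (ε - 1) := by ring
  rw [this]
  exact mul_ne_zero (pow_ne_zero 3 hε) (sub_ne_zero.mpr h1)

lemma epsn_A_ne_zero (n : ℕ) : epsn n ^ 4 - epsn n ^ 3 ≠ 0 :=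
  hA_of (epsn_ne_zero n) (epsn_ne_one n)

open Filter in
lemma epsn_tendsto : Tendsto epsn atTop (nhds 0) := by
  have h1 : Tendsto (fun n : ℕ => ((n : ℝ) + 2)⁻¹) atTop (nhds 0) :=
    tendsto_inv_atTop_zero.comp (tendsto_atTop_add_const_right atTop 2
      tendsto_natCast_atTop_atTop)
  have h2 := (Complex.continuous_ofReal.tendsto 0).comp h1
  have h3 : epsn = Complex.ofReal ∘ fun n : ℕ => ((n : ℝ) + 2)⁻¹ := by
    funext n
    rw [Function.comp_apply, epsn]
    push_cast
    ring
  rw [h3]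
  simpa using h2

open Filter in
lemma SF_tendsto (q : ℕ) (i j k : Fin (q + 2)) :
    Tendsto (fun n : ℕ => SF q (epsn n) i j k) atTop (nhds (muLim q i j k)) := by
  have h0 := epsn_tendsto
  have hc2 : Tendsto (fun n : ℕ => epsn n ^ 2) atTop (nhds 0) := by
    simpa using h0.pow 2
  have hc4 : Tendsto (fun n : ℕ => epsn n ^ 4 - epsn n ^ 3) atTop (nhds 0) := by
    simpa using (h0.pow 4).sub (h0.pow 3)
  have hdiv : Tendsto (fun n : ℕ => epsn n / (epsn n - 1)) atTop (nhds 0) := by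
    have hden : Tendsto (fun n : ℕ => epsn n - 1) atTop (nhds (-1)) := by
      simpa using h0.sub_const 1
    have := h0.div hden (by norm_num)
    rw [zero_div] at this
    exact this
  unfold SF muLim
  by_cases hi : i = 0
  · simp only [if_pos hi]
    exact tendsto_const_nhds
  by_cases hj : j = 0
  · simp only [if_neg hi, if_pos hj]
    exact tendsto_const_nhds
  by_cases hl : i = Fin.last (q + 1) ∨ j = Fin.last (q + 1)
  · simp only [if_neg hi, if_neg hj, if_pos hl]
    have hml : (if i = j ∧ i ≠ Fin.last (q + 1) ∧ k = Fin.last (q + 1) then (1:ℂ) else 0)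
        = 0 := by
      rw [if_neg]
      rintro ⟨hij, hil, -⟩
      rcases hl with h | h
      · exact hil h
      · exact hil (hij.trans h)
    rw [hml]
    by_cases hij : i = j
    · simp only [if_pos hij]
      by_cases hk : k = Fin.last (q + 1)
      · simp only [if_pos hk]; exact hc4
      · simp only [if_neg hk]; exact tendsto_const_nhds
    · simp only [if_neg hij]
      by_cases hk : k = Fin.last (q + 1)
      · simp only [if_pos hk]; exact hc2
      · simp only [if_neg hk]; exact tendsto_const_nhds
  · simp only [if_neg hi, if_neg hj, if_neg hl]
    push_neg at hl
    by_cases hij : i = j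
    · simp only [if_pos hij]
      have hml : (if i = j ∧ i ≠ Fin.last (q + 1) ∧ k = Fin.last (q + 1) then (1:ℂ) else 0)
          = if k = Fin.last (q + 1) then 1 else 0 := by
        by_cases hk : k = Fin.last (q + 1)
        · rw [if_pos ⟨hij, hl.1, hk⟩, if_pos hk]
        · rw [if_neg (fun h => hk h.2.2), if_neg hk]
      rw [hml]
      by_cases hk : k = Fin.last (q + 1)
      · simp only [if_pos hk]; exact tendsto_const_nhds
      · simp only [if_neg hk]
        by_cases hki : k = i
        · simp only [if_pos hki]; exact h0
        · simp only [if_neg hki]; exact tendsto_const_nhds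
    · simp only [if_neg hij]
      have hml : (if i = j ∧ i ≠ Fin.last (q + 1) ∧ k = Fin.last (q + 1) then (1:ℂ) else 0)
          = 0 := by rw [if_neg (fun h => hij h.1)]
      rw [hml]
      by_cases hk : k = Fin.last (q + 1)
      · simp only [if_pos hk]; exact hdiv
      · simp only [if_neg hk]; exact tendsto_const_nhds

open Filter in
/-- `(1, x₁, …, x_q, x₁²)` is a `ℂ`-basis of `A_CW`, and the
bilinear map on `ℂ^{q+2}` obtained by transporting the multiplication of
`A_CW` along this basis is smoothable. -/
theorem stmt8 (q : ℕ) (hq : 1 ≤ q) :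
    ∃ b : Module.Basis (Fin (q + 2)) ℂ (ACW q),
      b 0 = 1 ∧
      (∀ i : Fin q, b (emb q i) = Ideal.Quotient.mk (cwIdeal q) (MvPolynomial.X i)) ∧
      b (Fin.last (q + 1)) =
        Ideal.Quotient.mk (cwIdeal q) (MvPolynomial.X (⟨0, hq⟩ : Fin q) ^ 2) ∧
      (fun i j k => b.repr (b i * b j) k) ∈ closure (BilOrbit (diagMul (q + 2))) := by

  refine ⟨cwBasis q hq, ?_, ?_, ?_, ?_⟩
  · rw [cwBasis_apply, bvec_zero]
  · intro i
    rw [cwBasis_apply, bvec_emb]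
  · rw [cwBasis_apply, bvec_last]
  · rw [repr_eq_muLim hq]
    apply mem_closure_of_tendsto (f := fun n : ℕ => fun i j k => SF q (epsn n) i j k)
      (b := atTop)
    · rw [tendsto_pi_nhds]
      intro i
      rw [tendsto_pi_nhds]
      intro j
      rw [tendsto_pi_nhds]
      intro k
      exact SF_tendsto q i j k
    · filter_upwards with n
      refine ⟨gCW q (epsn n) (epsn_ne_zero n) (epsn_A_ne_zero n), ?_⟩
      funext i j k
      rw [gCW_coe, gCW_inv_coe, collapse]
      exact (sum_PPQ (epsn_ne_zero n) (epsn_A_ne_zero n) i j k).symm
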